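/- arXiv:1908.03948 — 2 statements merged into one kernel-verified Lean document; each statement's English description precedes it below -/
import Mathlib

section
/- Let (M,d) be a metric space with a finite point set S, and let OPT be the optimal k-center cost of S. If Y ⊆ S is r-separated (pairwise distances ≥ r) with |Y| > k, and C ⊆ S with |C| ≤ k satisfies max_{x∈S} min_{c∈C} d(x,c) ≤ α·r·α/(α−1) for the next scale α·r, then the cost of C is at most 2·(α/(α−1))·α · OPT. -/
/-- Combining the covering upper bound with the pigeonhole lower bound gives a
`2·(α/(α−1))·α` approximation ratio. -/
theorem stmt5 {M : Type*} [MetricSpace M] (S : Set M) (hS : S.Finite)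
    (k : ℕ) (hk : 0 < k) (α r : ℝ) (hα : 1 < α) (hr : 0 < r)
    (Y : Set M) (hYS : Y ⊆ S) (hYk : k < Y.ncard)
    (hsep : ∀ y ∈ Y, ∀ y' ∈ Y, y ≠ y' → r ≤ dist y y')
    (C : Set M) (hCS : C ⊆ S) (hCfin : C.Finite) (hCk : C.ncard ≤ k)
    (hcost : ∀ x ∈ S, ∃ c ∈ C, dist x c ≤ α * r * (α / (α - 1))) :
    ∀ C' : Set M, C'.Finite → C'.ncard ≤ k →
      ∀ opt : ℝ, (∀ x ∈ S, ∃ c' ∈ C', dist x c' ≤ opt) →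
        ∀ x ∈ S, ∃ c ∈ C, dist x c ≤ 2 * (α / (α - 1)) * α * opt := by
  intro C' hC'fin hC'k opt hopt x hx
  classical
  have hYfin : Y.Finite := hS.subset hYS
  -- pigeonhole: r ≤ 2 * opt
  have hr2 : r ≤ 2 * opt := by
    choose g hg hgd using fun y (hy : y ∈ Y) => hopt y (hYS hy)
    have hmaps : ∀ y ∈ hYfin.toFinset, (fun y => if hy : y ∈ Y then g y hy else x) y
        ∈ hC'fin.toFinset := by
      intro y hy
      simp only [Set.Finite.mem_toFinset] at hy ⊢
      simp [hy, hg y hy]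
    have hcard : hC'fin.toFinset.card < hYfin.toFinset.card := by
      rw [← Set.ncard_eq_toFinset_card Y hYfin, ← Set.ncard_eq_toFinset_card C' hC'fin]
      omega
    obtain ⟨y, hy, y', hy', hne, heq⟩ :=
      Finset.exists_ne_map_eq_of_card_lt_of_maps_to hcard hmaps
    rw [Set.Finite.mem_toFinset] at hy hy'
    simp only [dif_pos hy, dif_pos hy'] at heq
    have h1 := hgd y hy
    have h2 := hgd y' hy'
    have := hsep y hy y' hy' hne
    calc r ≤ dist y y' := this
      _ ≤ dist y (g y hy) + dist (g y' hy') y' := by rw [heq]; exact dist_triangle _ _ _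
      _ ≤ opt + opt := add_le_add h1 (by rwa [dist_comm])
      _ = 2 * opt := by ring
  obtain ⟨c, hc, hcd⟩ := hcost x hx
  refine ⟨c, hc, hcd.trans ?_⟩
  have hα1 : 0 < α - 1 := by linarith
  have hpos : 0 < α / (α - 1) := div_pos (by linarith) hα1
  calc α * r * (α / (α - 1)) ≤ α * (2 * opt) * (α / (α - 1)) := by
        apply mul_le_mul_of_nonneg_right _ hpos.le
        exact mul_le_mul_of_nonneg_left hr2 (by linarith)
    _ = 2 * (α / (α - 1)) * α * opt := by ring
end

section
/- Let S be a finite point set in a metric space and suppose for each scale index i we have an r_i-net Y_i of S with r_i = α^i. Define i* as the smallest index with |Y_{i*}| ≤ k (assuming |Y_{i*−1}| > k and that such i* exists). Then the set C = Y_{i*} satisfies |C| ≤ k and its k-center cost is at most (α²/(α−1)) · 2 · OPT_k, where each Y_i is an α^i-net of Y_{i−1} and Y_{i0} = S for small enough i0. -/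
/-- The smallest scale `i*` at which the net has at most `k` points yields a
`2α²/(α−1)`-approximate `k`-center solution. -/
theorem stmt18 {M : Type*} [MetricSpace M] (S : Set M) (hS : S.Finite)
    (k : ℕ) (hk : 0 < k) (α : ℝ) (hα : 1 < α)
    (Y : ℤ → Set M) (i0 istar : ℤ) (hi0 : i0 < istar)
    (hbase : Y i0 = S)
    (hnest : ∀ i : ℤ, i0 < i → Y i ⊆ Y (i - 1))
    (hsep : ∀ i : ℤ, i0 ≤ i → ∀ y ∈ Y i, ∀ y' ∈ Y i, y ≠ y' → α ^ i ≤ dist y y')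
    (hcov : ∀ i : ℤ, i0 < i → ∀ y ∈ Y (i - 1), ∃ z ∈ Y i, dist y z ≤ α ^ i)
    (hk1 : (Y istar).ncard ≤ k) (hk2 : k < (Y (istar - 1)).ncard) :
    ∀ C' : Finset M, C'.card ≤ k →
      ∀ R : ℝ, (∀ x ∈ S, ∃ c' ∈ C', dist x c' ≤ R) →
        ∀ x ∈ S, ∃ c ∈ Y istar, dist x c ≤ α ^ 2 / (α - 1) * 2 * R := by
  classical
  intro C' hC' R hcover x hx
  have hα0 : (0:ℝ) < α := lt_trans one_pos hα
  have hαne : α ≠ 0 := ne_of_gt hα0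
  have hα1 : (0:ℝ) < α - 1 := by linarith
  -- all nets are subsets of S
  have hsub : ∀ i : ℤ, i0 ≤ i → Y i ⊆ S := by
    refine Int.le_induction (by rw [hbase]) ?_
    intro n hn ih
    have h := hnest (n + 1) (by omega)
    rw [show (n : ℤ) + 1 - 1 = n by ring] at h
    exact h.trans ih
  -- lower bound on R via pigeonhole on Y (istar - 1)
  have hRlb : α ^ (istar - 1) ≤ 2 * R := by
    have hfin : (Y (istar - 1)).Finite := hS.subset (hsub _ (by omega))
    have hTcard : k < hfin.toFinset.card := by
      rwa [Set.ncard_eq_toFinset_card _ hfin] at hk2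
    have hc : ∀ y : M, ∃ c, y ∈ hfin.toFinset → c ∈ C' ∧ dist y c ≤ R := by
      intro y
      by_cases hy : y ∈ hfin.toFinset
      · obtain ⟨c, hc1, hc2⟩ := hcover y (hsub _ (by omega) (hfin.mem_toFinset.mp hy))
        exact ⟨c, fun _ => ⟨hc1, hc2⟩⟩
      · exact ⟨x, fun h' => absurd h' hy⟩
    choose f hf using hc
    have hmap : ∀ y ∈ hfin.toFinset, f y ∈ C' := fun y hy => (hf y hy).1
    obtain ⟨a, ha, b, hb, hab, hfab⟩ :=
      Finset.exists_ne_map_eq_of_card_lt_of_maps_to (lt_of_le_of_lt hC' hTcard) hmap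
    have hdab : dist a b ≤ 2 * R := by
      have htri := dist_triangle a (f a) b
      have h1 := (hf a ha).2
      have h2 := (hf b hb).2
      rw [hfab] at htri h1
      rw [dist_comm] at h2
      linarith
    have hsepab := hsep (istar - 1) (by omega) a (hfin.mem_toFinset.mp ha)
      b (hfin.mem_toFinset.mp hb) hab
    linarith
  -- covering chain
  have hchain : ∀ i : ℤ, i0 ≤ i → ∀ x ∈ S,
      ∃ z ∈ Y i, dist x z ≤ (α ^ (i + 1) - α ^ (i0 + 1)) / (α - 1) := by
    refine Int.le_induction ?_ ?_
    · intro x hx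
      refine ⟨x, by rw [hbase]; exact hx, ?_⟩
      simp
    · intro n hn ih x hx
      obtain ⟨z, hz, hd⟩ := ih x hx
      obtain ⟨z', hz', hd'⟩ := hcov (n + 1) (by omega) z (by simpa using hz)
      refine ⟨z', hz', ?_⟩
      have htri := dist_triangle x z z'
      have key : (α ^ (n + 1) - α ^ (i0 + 1)) / (α - 1) + α ^ (n + 1)
          = (α ^ (n + 1 + 1) - α ^ (i0 + 1)) / (α - 1) := by
        have hz2 : α ^ (n + 1 + 1) = α ^ (n + 1) * α := by
          rw [zpow_add_one₀ hαne]
        field_simp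
        rw [hz2]; ring
      linarith
  obtain ⟨z, hz, hd⟩ := hchain istar (le_of_lt hi0) x hx
  refine ⟨z, hz, ?_⟩
  have hpow : α ^ (istar + 1) = α ^ (istar - 1) * (α * α) := by
    rw [show istar + 1 = (istar - 1) + 1 + 1 by ring, zpow_add_one₀ hαne,
      zpow_add_one₀ hαne]
    ring
  have hB : (α ^ (istar + 1) - α ^ (i0 + 1)) / (α - 1) ≤ α ^ (istar + 1) / (α - 1) := by
    have : (0:ℝ) < α ^ (i0 + 1) := zpow_pos hα0 _
    apply div_le_div_of_nonneg_right ?_ hα1.le |>.trans_eq rfl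
    · linarith
  have hP0 : (0:ℝ) ≤ α ^ (istar - 1) := le_of_lt (zpow_pos hα0 _)
  have hfin : α ^ (istar + 1) / (α - 1) ≤ α ^ 2 / (α - 1) * 2 * R := by
    rw [hpow]
    have hαα : (0:ℝ) < α * α := by positivity
    have h1 : α ^ (istar - 1) * (α * α) ≤ 2 * R * (α * α) :=
      mul_le_mul_of_nonneg_right hRlb (le_of_lt hαα)
    have h2 : α ^ (istar - 1) * (α * α) / (α - 1) ≤ 2 * R * (α * α) / (α - 1) :=
      div_le_div_of_nonneg_right h1 hα1.le |>.trans_eq rfl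
    calc α ^ (istar - 1) * (α * α) / (α - 1) ≤ 2 * R * (α * α) / (α - 1) := h2
      _ = α ^ 2 / (α - 1) * 2 * R := by rw [sq]; ring
  linarith
end
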